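/- Let 0 ≤ s ≤ r ≤ t ≤ T_k and let u, w ∈ ℝ^d be such that X has the affine property at ψ_{T−t}(u_k) + w and at ψ_{t−r}(ψ_{T−t}(u_k) + w) + u, and assume (φ, ψ) satisfy the semiflow equations at u_k. Then, Q'-almost surely, E_{Q'}[exp(u·X_r + w·X_t) | ℱ_s] = exp( φ_{t−r}(ψ_{T−t}(u_k) + w) + φ_{r−s}(ψ_{t−r}(ψ_{T−t}(u_k) + w) + u) − φ_{t−s}(ψ_{T−t}(u_k)) + (ψ_{r−s}(ψ_{t−r}(ψ_{T−t}(u_k) + w) + u) − ψ_{T−s}(u_k))·X_s ). -/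

import Mathlib

open MeasureTheory Real Matrix

/-- `X` has the affine property at `u` with exponent functions `φ, ψ`, with respect to the
filtration `ℱ`, the measure `Q` and the horizon `T`. -/
def AffineProperty {Ω : Type*} {m0 : MeasurableSpace Ω} {d : ℕ} (T : ℝ)
    (ℱ : MeasureTheory.Filtration ℝ m0) (Q : Measure Ω) (X : ℝ → Ω → (Fin d → ℝ))
    (φ : ℝ → (Fin d → ℝ) → ℝ) (ψ : ℝ → (Fin d → ℝ) → (Fin d → ℝ))
    (u : Fin d → ℝ) : Prop :=
  ∀ s t : ℝ, 0 ≤ s → s ≤ t → t ≤ T →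
    Integrable (fun ω => exp (u ⬝ᵥ X t ω)) Q ∧
    Q[fun ω => exp (u ⬝ᵥ X t ω)|ℱ s] =ᵐ[Q]
      fun ω => exp (φ (t - s) u + ψ (t - s) u ⬝ᵥ X s ω)

/-- `(φ, ψ)` satisfy the semiflow equations at the vector `v`, up to horizon `T`. -/
def Semiflow {d : ℕ} (T : ℝ) (φ : ℝ → (Fin d → ℝ) → ℝ)
    (ψ : ℝ → (Fin d → ℝ) → (Fin d → ℝ)) (v : Fin d → ℝ) : Prop :=
  (∀ s t : ℝ, 0 ≤ s → 0 ≤ t → t + s ≤ T →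
      φ (t + s) v = φ t v + φ s (ψ t v) ∧ ψ (t + s) v = ψ s (ψ t v)) ∧
    φ 0 v = 0 ∧ ψ 0 v = v

/-- The forward measure `Q'` defined by the density
`dQ'/dQ = exp (φ (T - Tk) uk + ψ (T - Tk) uk ⬝ᵥ X Tk) / exp (φ T uk + ψ T uk ⬝ᵥ x)`. -/
noncomputable def forwardMeasure {Ω : Type*} {m0 : MeasurableSpace Ω} {d : ℕ} (T : ℝ)
    (Q : Measure Ω) (X : ℝ → Ω → (Fin d → ℝ)) (x : Fin d → ℝ)
    (φ : ℝ → (Fin d → ℝ) → ℝ) (ψ : ℝ → (Fin d → ℝ) → (Fin d → ℝ))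
    (Tk : ℝ) (uk : Fin d → ℝ) : Measure Ω :=
  Q.withDensity (fun ω => ENNReal.ofReal
    (exp (φ (T - Tk) uk + ψ (T - Tk) uk ⬝ᵥ X Tk ω) / exp (φ T uk + ψ T uk ⬝ᵥ x)))


open scoped ENNReal

lemma lintegral_mul_ofReal_condexp {Ω : Type*} {m m0 : MeasurableSpace Ω} (hm : m ≤ m0)
    {μ : Measure Ω} [IsFiniteMeasure μ] {Y Y' : Ω → ℝ}
    (hYm : Measurable Y) (hYi : Integrable Y μ) (hY0 : 0 ≤ᵐ[μ] Y)
    (hY' : μ[Y|m] =ᵐ[μ] Y') (hY'm : Measurable[m] Y')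
    {Z : Ω → ℝ≥0∞} (hZ : Measurable[m] Z) :
    ∫⁻ ω, Z ω * ENNReal.ofReal (Y ω) ∂μ = ∫⁻ ω, Z ω * ENNReal.ofReal (Y' ω) ∂μ := by
  have hY'0 : 0 ≤ᵐ[μ] Y' := by
    filter_upwards [condExp_nonneg hY0, hY'] with ω h e
    rw [← e]; exact h
  have hY'i : Integrable Y' μ := integrable_condExp.congr hY'
  have hY'm0 : Measurable Y' := hY'm.mono hm le_rfl
  have hZ0 : Measurable Z := hZ.mono hm le_rfl
  have htrim : (μ.withDensity (fun ω => ENNReal.ofReal (Y ω))).trim hm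
      = (μ.withDensity (fun ω => ENNReal.ofReal (Y' ω))).trim hm := by
    refine @Measure.ext Ω m _ _ fun A hA => ?_
    rw [trim_measurableSet_eq hm hA, trim_measurableSet_eq hm hA,
      withDensity_apply _ (hm _ hA), withDensity_apply _ (hm _ hA),
      ← ofReal_integral_eq_lintegral_ofReal hYi.restrict (ae_restrict_of_ae hY0),
      ← ofReal_integral_eq_lintegral_ofReal hY'i.restrict (ae_restrict_of_ae hY'0)]
    congr 1
    rw [← setIntegral_condExp hm hYi hA]
    exact integral_congr_ae (ae_restrict_of_ae hY')
  calc ∫⁻ ω, Z ω * ENNReal.ofReal (Y ω) ∂μ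
      = ∫⁻ ω, Z ω ∂(μ.withDensity (fun ω => ENNReal.ofReal (Y ω))) := by
        rw [lintegral_withDensity_eq_lintegral_mul _ hYm.ennreal_ofReal hZ0]
        simp [mul_comm]
    _ = ∫⁻ ω, Z ω ∂((μ.withDensity (fun ω => ENNReal.ofReal (Y ω))).trim hm) :=
        (lintegral_trim hm hZ).symm
    _ = ∫⁻ ω, Z ω ∂((μ.withDensity (fun ω => ENNReal.ofReal (Y' ω))).trim hm) := by rw [htrim]
    _ = ∫⁻ ω, Z ω ∂(μ.withDensity (fun ω => ENNReal.ofReal (Y' ω))) := lintegral_trim hm hZ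
    _ = ∫⁻ ω, Z ω * ENNReal.ofReal (Y' ω) ∂μ := by
        rw [lintegral_withDensity_eq_lintegral_mul _ hY'm0.ennreal_ofReal hZ0]
        simp [mul_comm]

set_option maxHeartbeats 1000000 in
/-- Under the forward measure `Q'`, for `0 ≤ s ≤ r ≤ t ≤ Tk` and vectors `u, w` such that `X`
has the affine property at `ψ (T - t) uk + w` and at `ψ (t - r) (ψ (T - t) uk + w) + u`, with
`(φ, ψ)` satisfying the semiflow equations at `uk`, one has `Q'`-a.s.
`E_{Q'}[exp (u ⬝ᵥ X r + w ⬝ᵥ X t) | ℱ s]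
  = exp (φ (t-r) (ψ (T-t) uk + w) + φ (r-s) (ψ (t-r) (ψ (T-t) uk + w) + u)
      - φ (t-s) (ψ (T-t) uk)
      + (ψ (r-s) (ψ (t-r) (ψ (T-t) uk + w) + u) - ψ (T-s) uk) ⬝ᵥ X s)`. -/
theorem forward_measure_joint_mgf
    {Ω : Type*} {m0 : MeasurableSpace Ω} {d : ℕ} (T : ℝ) (hT : 0 < T)
    (ℱ : MeasureTheory.Filtration ℝ m0) (Q : Measure Ω) [IsProbabilityMeasure Q]
    (X : ℝ → Ω → (Fin d → ℝ)) (x : Fin d → ℝ)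
    (hadapted : ∀ t : ℝ, 0 ≤ t → t ≤ T → Measurable[ℱ t] (X t))
    (hX0 : ∀ ω, X 0 ω = x)
    (φ : ℝ → (Fin d → ℝ) → ℝ) (ψ : ℝ → (Fin d → ℝ) → (Fin d → ℝ))
    (Tk : ℝ) (hTk0 : 0 ≤ Tk) (hTkT : Tk ≤ T) (uk : Fin d → ℝ)
    (haffine_uk : AffineProperty T ℱ Q X φ ψ uk)
    (haffine_psi : AffineProperty T ℱ Q X φ ψ (ψ (T - Tk) uk))
    (s r t : ℝ) (hs : 0 ≤ s) (hsr : s ≤ r) (hrt : r ≤ t) (htTk : t ≤ Tk)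
    (u w : Fin d → ℝ)
    (haffine_w : AffineProperty T ℱ Q X φ ψ (ψ (T - t) uk + w))
    (haffine_u : AffineProperty T ℱ Q X φ ψ (ψ (t - r) (ψ (T - t) uk + w) + u))
    (hsemiflow : Semiflow T φ ψ uk) :
    (forwardMeasure T Q X x φ ψ Tk uk)[fun ω => exp (u ⬝ᵥ X r ω + w ⬝ᵥ X t ω)|ℱ s]
      =ᵐ[forwardMeasure T Q X x φ ψ Tk uk]
    fun ω => exp (φ (t - r) (ψ (T - t) uk + w)
      + φ (r - s) (ψ (t - r) (ψ (T - t) uk + w) + u)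
      - φ (t - s) (ψ (T - t) uk)
      + (ψ (r - s) (ψ (t - r) (ψ (T - t) uk + w) + u) - ψ (T - s) uk) ⬝ᵥ X s ω) := by
  classical
  -- bounds
  have h0r : 0 ≤ r := hs.trans hsr
  have h0t : 0 ≤ t := h0r.trans hrt
  have hsTk : s ≤ Tk := hsr.trans (hrt.trans htTk)
  have htT : t ≤ T := htTk.trans hTkT
  have hrT : r ≤ T := hrt.trans htT
  have hsT : s ≤ T := hsr.trans hrT
  -- measurability helpers
  have hXm : ∀ τ : ℝ, 0 ≤ τ → τ ≤ T → Measurable (X τ) :=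
    fun τ h1 h2 => (hadapted τ h1 h2).mono (ℱ.le τ) le_rfl
  have hdot : ∀ (m' : MeasurableSpace Ω) (v : Fin d → ℝ) (f : Ω → Fin d → ℝ),
      Measurable[m'] f → Measurable[m'] (fun ω => v ⬝ᵥ f ω) := by
    intro m' v f hf
    simp only [dotProduct]
    exact Finset.measurable_sum _ fun i _ =>
      (measurable_const.mul ((measurable_pi_apply i).comp hf))
  have Emul : ∀ a b : ℝ, ENNReal.ofReal (exp a) * ENNReal.ofReal (exp b)
      = ENNReal.ofReal (exp (a + b)) := fun a b => by
    rw [← ENNReal.ofReal_mul (exp_pos a).le, ← Real.exp_add]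
  have Econg : ∀ a b : ℝ, a = b → ENNReal.ofReal (exp a) = ENNReal.ofReal (exp b) :=
    fun a b h => by rw [h]
  -- semiflow facts
  obtain ⟨hsf, hφ0, hψ0⟩ := hsemiflow
  have h1t := hsf (Tk - t) (T - Tk) (by linarith) (by linarith) (by linarith)
  rw [show T - Tk + (Tk - t) = T - t from by ring] at h1t
  have h1s := hsf (Tk - s) (T - Tk) (by linarith) (by linarith) (by linarith)
  rw [show T - Tk + (Tk - s) = T - s from by ring] at h1s
  have h2s := hsf (t - s) (T - t) (by linarith) (by linarith) (by linarith)
  rw [show T - t + (t - s) = T - s from by ring] at h2s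
  -- affine facts
  have haψt := haffine_psi t Tk h0t htTk hTkT
  have haψs := haffine_psi s Tk hs hsTk hTkT
  have haw := haffine_w r t h0r hrt htT
  have hau := haffine_u s r hs hsr hrT
  -- density
  have hDm : Measurable (fun ω => ENNReal.ofReal
      (exp (φ (T - Tk) uk + ψ (T - Tk) uk ⬝ᵥ X Tk ω) / exp (φ T uk + ψ T uk ⬝ᵥ x))) :=
    (((measurable_const.add (hdot _ _ _ (hXm Tk hTk0 hTkT))).exp).div_const _).ennreal_ofReal
  have hQ'd : forwardMeasure T Q X x φ ψ Tk uk = Q.withDensity (fun ω => ENNReal.ofReal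
      (exp (φ (T - Tk) uk + ψ (T - Tk) uk ⬝ᵥ X Tk ω) / exp (φ T uk + ψ T uk ⬝ᵥ x))) := rfl
  have hDpt : ∀ (G : ℝ) (ω : Ω),
      ENNReal.ofReal (exp (φ (T - Tk) uk + ψ (T - Tk) uk ⬝ᵥ X Tk ω)
        / exp (φ T uk + ψ T uk ⬝ᵥ x)) * ENNReal.ofReal (exp G)
      = ENNReal.ofReal (exp ((φ (T - Tk) uk - (φ T uk + ψ T uk ⬝ᵥ x) + G)
          + ψ (T - Tk) uk ⬝ᵥ X Tk ω)) := by
    intro G ω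
    rw [← Real.exp_sub, Emul]
    exact Econg _ _ (by ring)
  -- the two key lintegral computations
  have key : ∀ A : Set Ω, MeasurableSet[ℱ s] A →
      ∫⁻ ω in A, ENNReal.ofReal (exp (φ (T - Tk) uk + ψ (T - Tk) uk ⬝ᵥ X Tk ω)
          / exp (φ T uk + ψ T uk ⬝ᵥ x))
        * ENNReal.ofReal (exp (u ⬝ᵥ X r ω + w ⬝ᵥ X t ω)) ∂Q
      = ENNReal.ofReal (exp (φ (T - t) uk - (φ T uk + ψ T uk ⬝ᵥ x)
            + φ (t - r) (ψ (T - t) uk + w)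
            + φ (r - s) (ψ (t - r) (ψ (T - t) uk + w) + u)))
        * ∫⁻ ω, A.indicator (fun _ => (1 : ℝ≥0∞)) ω
          * ENNReal.ofReal (exp (ψ (r - s) (ψ (t - r) (ψ (T - t) uk + w) + u) ⬝ᵥ X s ω)) ∂Q := by
    intro A hA
    have hAm : MeasurableSet A := ℱ.le s _ hA
    have hIAs : Measurable[ℱ s] (A.indicator (fun _ => (1 : ℝ≥0∞))) :=
      measurable_const.indicator hA
    have hIAr : Measurable[ℱ r] (A.indicator (fun _ => (1 : ℝ≥0∞))) :=
      hIAs.mono (ℱ.mono hsr) le_rfl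
    have hIAt : Measurable[ℱ t] (A.indicator (fun _ => (1 : ℝ≥0∞))) :=
      hIAs.mono (ℱ.mono (hsr.trans hrt)) le_rfl
    calc ∫⁻ ω in A, ENNReal.ofReal (exp (φ (T - Tk) uk + ψ (T - Tk) uk ⬝ᵥ X Tk ω)
            / exp (φ T uk + ψ T uk ⬝ᵥ x))
          * ENNReal.ofReal (exp (u ⬝ᵥ X r ω + w ⬝ᵥ X t ω)) ∂Q
        = ∫⁻ ω, A.indicator (fun _ => (1 : ℝ≥0∞)) ω
            * ENNReal.ofReal (exp ((φ (T - Tk) uk - (φ T uk + ψ T uk ⬝ᵥ x)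
                + (u ⬝ᵥ X r ω + w ⬝ᵥ X t ω)) + ψ (T - Tk) uk ⬝ᵥ X Tk ω)) ∂Q := by
          rw [← lintegral_indicator hAm]
          refine lintegral_congr fun ω => ?_
          by_cases h : ω ∈ A
          · rw [Set.indicator_of_mem h, Set.indicator_of_mem h, one_mul, hDpt]
          · simp [Set.indicator_of_notMem h]
      _ = ∫⁻ ω, (A.indicator (fun _ => (1 : ℝ≥0∞)) ω
            * ENNReal.ofReal (exp (φ (T - Tk) uk - (φ T uk + ψ T uk ⬝ᵥ x)
                + (u ⬝ᵥ X r ω + w ⬝ᵥ X t ω))))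
            * ENNReal.ofReal (exp (ψ (T - Tk) uk ⬝ᵥ X Tk ω)) ∂Q := by
          refine lintegral_congr fun ω => ?_
          rw [mul_assoc, Emul]
      _ = ∫⁻ ω, (A.indicator (fun _ => (1 : ℝ≥0∞)) ω
            * ENNReal.ofReal (exp (φ (T - Tk) uk - (φ T uk + ψ T uk ⬝ᵥ x)
                + (u ⬝ᵥ X r ω + w ⬝ᵥ X t ω))))
            * ENNReal.ofReal (exp (φ (Tk - t) (ψ (T - Tk) uk)
                + ψ (Tk - t) (ψ (T - Tk) uk) ⬝ᵥ X t ω)) ∂Q := by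
          refine lintegral_mul_ofReal_condexp (ℱ.le t)
            ((hdot _ _ _ (hXm Tk hTk0 hTkT)).exp) haψt.1
            (ae_of_all _ fun ω => (exp_pos _).le) haψt.2
            ((measurable_const.add (hdot _ _ _ (hadapted t h0t htT))).exp)
            (hIAt.mul ((measurable_const.add
              ((hdot _ _ _ ((hadapted r h0r hrT).mono (ℱ.mono hrt) le_rfl)).add
                (hdot _ _ _ (hadapted t h0t htT)))).exp.ennreal_ofReal))
      _ = ∫⁻ ω, (A.indicator (fun _ => (1 : ℝ≥0∞)) ω
            * ENNReal.ofReal (exp ((φ (T - t) uk - (φ T uk + ψ T uk ⬝ᵥ x))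
                + u ⬝ᵥ X r ω)))
            * ENNReal.ofReal (exp ((ψ (T - t) uk + w) ⬝ᵥ X t ω)) ∂Q := by
          refine lintegral_congr fun ω => ?_
          rw [mul_assoc, mul_assoc, Emul, Emul]
          congr 1
          refine Econg _ _ ?_
          rw [add_dotProduct, ← h1t.2]
          linarith [h1t.1]
      _ = ∫⁻ ω, (A.indicator (fun _ => (1 : ℝ≥0∞)) ω
            * ENNReal.ofReal (exp ((φ (T - t) uk - (φ T uk + ψ T uk ⬝ᵥ x))
                + u ⬝ᵥ X r ω)))
            * ENNReal.ofReal (exp (φ (t - r) (ψ (T - t) uk + w)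
                + ψ (t - r) (ψ (T - t) uk + w) ⬝ᵥ X r ω)) ∂Q := by
          refine lintegral_mul_ofReal_condexp (ℱ.le r)
            ((hdot _ _ _ (hXm t h0t htT)).exp) haw.1
            (ae_of_all _ fun ω => (exp_pos _).le) haw.2
            ((measurable_const.add (hdot _ _ _ (hadapted r h0r hrT))).exp)
            (hIAr.mul ((measurable_const.add
              (hdot _ _ _ (hadapted r h0r hrT))).exp.ennreal_ofReal))
      _ = ∫⁻ ω, (A.indicator (fun _ => (1 : ℝ≥0∞)) ω
            * ENNReal.ofReal (exp (φ (T - t) uk - (φ T uk + ψ T uk ⬝ᵥ x)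
                + φ (t - r) (ψ (T - t) uk + w))))
            * ENNReal.ofReal (exp ((ψ (t - r) (ψ (T - t) uk + w) + u) ⬝ᵥ X r ω)) ∂Q := by
          refine lintegral_congr fun ω => ?_
          rw [mul_assoc, mul_assoc, Emul, Emul]
          congr 1
          refine Econg _ _ ?_
          rw [add_dotProduct]
          ring
      _ = ∫⁻ ω, (A.indicator (fun _ => (1 : ℝ≥0∞)) ω
            * ENNReal.ofReal (exp (φ (T - t) uk - (φ T uk + ψ T uk ⬝ᵥ x)
                + φ (t - r) (ψ (T - t) uk + w))))
            * ENNReal.ofReal (exp (φ (r - s) (ψ (t - r) (ψ (T - t) uk + w) + u)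
                + ψ (r - s) (ψ (t - r) (ψ (T - t) uk + w) + u) ⬝ᵥ X s ω)) ∂Q := by
          refine lintegral_mul_ofReal_condexp (ℱ.le s)
            ((hdot _ _ _ (hXm r h0r hrT)).exp) hau.1
            (ae_of_all _ fun ω => (exp_pos _).le) hau.2
            ((measurable_const.add (hdot _ _ _ (hadapted s hs hsT))).exp)
            (hIAs.mul measurable_const)
      _ = ENNReal.ofReal (exp (φ (T - t) uk - (φ T uk + ψ T uk ⬝ᵥ x)
            + φ (t - r) (ψ (T - t) uk + w)
            + φ (r - s) (ψ (t - r) (ψ (T - t) uk + w) + u)))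
          * ∫⁻ ω, A.indicator (fun _ => (1 : ℝ≥0∞)) ω
            * ENNReal.ofReal (exp (ψ (r - s) (ψ (t - r) (ψ (T - t) uk + w) + u) ⬝ᵥ X s ω)) ∂Q := by
          rw [← lintegral_const_mul' _ _ ENNReal.ofReal_ne_top]
          refine lintegral_congr fun ω => ?_
          rw [mul_assoc, Emul, mul_left_comm, Emul]
          congr 1
          exact Econg _ _ (by ring)
  have key2 : ∀ A : Set Ω, MeasurableSet[ℱ s] A →
      ∫⁻ ω in A, ENNReal.ofReal (exp (φ (T - Tk) uk + ψ (T - Tk) uk ⬝ᵥ X Tk ω)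
          / exp (φ T uk + ψ T uk ⬝ᵥ x))
        * ENNReal.ofReal (exp (φ (t - r) (ψ (T - t) uk + w)
            + φ (r - s) (ψ (t - r) (ψ (T - t) uk + w) + u)
            - φ (t - s) (ψ (T - t) uk)
            + (ψ (r - s) (ψ (t - r) (ψ (T - t) uk + w) + u) - ψ (T - s) uk) ⬝ᵥ X s ω)) ∂Q
      = ENNReal.ofReal (exp (φ (T - t) uk - (φ T uk + ψ T uk ⬝ᵥ x)
            + φ (t - r) (ψ (T - t) uk + w)
            + φ (r - s) (ψ (t - r) (ψ (T - t) uk + w) + u)))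
        * ∫⁻ ω, A.indicator (fun _ => (1 : ℝ≥0∞)) ω
          * ENNReal.ofReal (exp (ψ (r - s) (ψ (t - r) (ψ (T - t) uk + w) + u) ⬝ᵥ X s ω)) ∂Q := by
    intro A hA
    have hAm : MeasurableSet A := ℱ.le s _ hA
    have hIAs : Measurable[ℱ s] (A.indicator (fun _ => (1 : ℝ≥0∞))) :=
      measurable_const.indicator hA
    calc ∫⁻ ω in A, ENNReal.ofReal (exp (φ (T - Tk) uk + ψ (T - Tk) uk ⬝ᵥ X Tk ω)
            / exp (φ T uk + ψ T uk ⬝ᵥ x))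
          * ENNReal.ofReal (exp (φ (t - r) (ψ (T - t) uk + w)
              + φ (r - s) (ψ (t - r) (ψ (T - t) uk + w) + u)
              - φ (t - s) (ψ (T - t) uk)
              + (ψ (r - s) (ψ (t - r) (ψ (T - t) uk + w) + u) - ψ (T - s) uk) ⬝ᵥ X s ω)) ∂Q
        = ∫⁻ ω, A.indicator (fun _ => (1 : ℝ≥0∞)) ω
            * ENNReal.ofReal (exp ((φ (T - Tk) uk - (φ T uk + ψ T uk ⬝ᵥ x)
                + (φ (t - r) (ψ (T - t) uk + w)
                  + φ (r - s) (ψ (t - r) (ψ (T - t) uk + w) + u)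
                  - φ (t - s) (ψ (T - t) uk)
                  + (ψ (r - s) (ψ (t - r) (ψ (T - t) uk + w) + u) - ψ (T - s) uk) ⬝ᵥ X s ω))
                + ψ (T - Tk) uk ⬝ᵥ X Tk ω)) ∂Q := by
          rw [← lintegral_indicator hAm]
          refine lintegral_congr fun ω => ?_
          by_cases h : ω ∈ A
          · rw [Set.indicator_of_mem h, Set.indicator_of_mem h, one_mul, hDpt]
          · simp [Set.indicator_of_notMem h]
      _ = ∫⁻ ω, (A.indicator (fun _ => (1 : ℝ≥0∞)) ω
            * ENNReal.ofReal (exp (φ (T - Tk) uk - (φ T uk + ψ T uk ⬝ᵥ x)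
                + (φ (t - r) (ψ (T - t) uk + w)
                  + φ (r - s) (ψ (t - r) (ψ (T - t) uk + w) + u)
                  - φ (t - s) (ψ (T - t) uk)
                  + (ψ (r - s) (ψ (t - r) (ψ (T - t) uk + w) + u) - ψ (T - s) uk) ⬝ᵥ X s ω))))
            * ENNReal.ofReal (exp (ψ (T - Tk) uk ⬝ᵥ X Tk ω)) ∂Q := by
          refine lintegral_congr fun ω => ?_
          rw [mul_assoc, Emul]
      _ = ∫⁻ ω, (A.indicator (fun _ => (1 : ℝ≥0∞)) ω
            * ENNReal.ofReal (exp (φ (T - Tk) uk - (φ T uk + ψ T uk ⬝ᵥ x)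
                + (φ (t - r) (ψ (T - t) uk + w)
                  + φ (r - s) (ψ (t - r) (ψ (T - t) uk + w) + u)
                  - φ (t - s) (ψ (T - t) uk)
                  + (ψ (r - s) (ψ (t - r) (ψ (T - t) uk + w) + u) - ψ (T - s) uk) ⬝ᵥ X s ω))))
            * ENNReal.ofReal (exp (φ (Tk - s) (ψ (T - Tk) uk)
                + ψ (Tk - s) (ψ (T - Tk) uk) ⬝ᵥ X s ω)) ∂Q := by
          refine lintegral_mul_ofReal_condexp (ℱ.le s)
            ((hdot _ _ _ (hXm Tk hTk0 hTkT)).exp) haψs.1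
            (ae_of_all _ fun ω => (exp_pos _).le) haψs.2
            ((measurable_const.add (hdot _ _ _ (hadapted s hs hsT))).exp)
            (hIAs.mul ((measurable_const.add (measurable_const.add
              (hdot _ _ _ (hadapted s hs hsT)))).exp.ennreal_ofReal))
      _ = ENNReal.ofReal (exp (φ (T - t) uk - (φ T uk + ψ T uk ⬝ᵥ x)
            + φ (t - r) (ψ (T - t) uk + w)
            + φ (r - s) (ψ (t - r) (ψ (T - t) uk + w) + u)))
          * ∫⁻ ω, A.indicator (fun _ => (1 : ℝ≥0∞)) ω
            * ENNReal.ofReal (exp (ψ (r - s) (ψ (t - r) (ψ (T - t) uk + w) + u) ⬝ᵥ X s ω)) ∂Q := by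
          rw [← lintegral_const_mul' _ _ ENNReal.ofReal_ne_top]
          refine lintegral_congr fun ω => ?_
          rw [mul_assoc, Emul, mul_left_comm, Emul]
          congr 1
          refine Econg _ _ ?_
          rw [sub_dotProduct, ← h1s.2]
          linarith [h1s.1, h2s.1]
  -- measurability of the two relevant functions
  have hgm : Measurable (fun ω => exp (u ⬝ᵥ X r ω + w ⬝ᵥ X t ω)) :=
    ((hdot _ _ _ (hXm r h0r hrT)).add (hdot _ _ _ (hXm t h0t htT))).exp
  have hRms : Measurable[ℱ s] (fun ω => exp (φ (t - r) (ψ (T - t) uk + w)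
      + φ (r - s) (ψ (t - r) (ψ (T - t) uk + w) + u)
      - φ (t - s) (ψ (T - t) uk)
      + (ψ (r - s) (ψ (t - r) (ψ (T - t) uk + w) + u) - ψ (T - s) uk) ⬝ᵥ X s ω)) :=
    (measurable_const.add (hdot _ _ _ (hadapted s hs hsT))).exp
  have hRm : Measurable (fun ω => exp (φ (t - r) (ψ (T - t) uk + w)
      + φ (r - s) (ψ (t - r) (ψ (T - t) uk + w) + u)
      - φ (t - s) (ψ (T - t) uk)
      + (ψ (r - s) (ψ (t - r) (ψ (T - t) uk + w) + u) - ψ (T - s) uk) ⬝ᵥ X s ω)) :=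
    hRms.mono (ℱ.le s) le_rfl
  -- integrability of the tail integrand
  have hvs_int : Integrable
      (fun ω => exp (ψ (r - s) (ψ (t - r) (ψ (T - t) uk + w) + u) ⬝ᵥ X s ω)) Q := by
    have h1 : Integrable (fun ω => exp (φ (r - s) (ψ (t - r) (ψ (T - t) uk + w) + u)
        + ψ (r - s) (ψ (t - r) (ψ (T - t) uk + w) + u) ⬝ᵥ X s ω)) Q :=
      integrable_condExp.congr hau.2
    refine (h1.const_mul (exp (-(φ (r - s) (ψ (t - r) (ψ (T - t) uk + w) + u))))).congr
      (ae_of_all _ fun ω => ?_)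
    simp only [← Real.exp_add]
    congr 1
    ring
  have hJfin : (∫⁻ ω, (Set.univ : Set Ω).indicator (fun _ => (1 : ℝ≥0∞)) ω
      * ENNReal.ofReal (exp (ψ (r - s) (ψ (t - r) (ψ (T - t) uk + w) + u) ⬝ᵥ X s ω)) ∂Q)
      < ⊤ := by
    have e : (∫⁻ ω, (Set.univ : Set Ω).indicator (fun _ => (1 : ℝ≥0∞)) ω
        * ENNReal.ofReal (exp (ψ (r - s) (ψ (t - r) (ψ (T - t) uk + w) + u) ⬝ᵥ X s ω)) ∂Q)
        = ∫⁻ ω, ENNReal.ofReal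
          (exp (ψ (r - s) (ψ (t - r) (ψ (T - t) uk + w) + u) ⬝ᵥ X s ω)) ∂Q :=
      lintegral_congr fun ω => by simp
    rw [e]
    exact hvs_int.lintegral_lt_top
  -- converting set integrals over the forward measure
  have hconv : ∀ (h : Ω → ℝ), Measurable h → ∀ (A : Set Ω), MeasurableSet A →
      ∫⁻ ω, ENNReal.ofReal (h ω) ∂((forwardMeasure T Q X x φ ψ Tk uk).restrict A)
      = ∫⁻ ω in A, ENNReal.ofReal (exp (φ (T - Tk) uk + ψ (T - Tk) uk ⬝ᵥ X Tk ω)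
          / exp (φ T uk + ψ T uk ⬝ᵥ x)) * ENNReal.ofReal (h ω) ∂Q := by
    intro h hm A hAm
    rw [hQ'd, restrict_withDensity hAm,
      lintegral_withDensity_eq_lintegral_mul _ hDm hm.ennreal_ofReal]
    simp only [Pi.mul_apply]
  have hintQ' : ∀ (h : Ω → ℝ), Measurable h → (∀ ω, 0 ≤ h ω) →
      (∫⁻ ω in Set.univ, ENNReal.ofReal (exp (φ (T - Tk) uk + ψ (T - Tk) uk ⬝ᵥ X Tk ω)
        / exp (φ T uk + ψ T uk ⬝ᵥ x)) * ENNReal.ofReal (h ω) ∂Q) < ⊤ →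
      Integrable h (forwardMeasure T Q X x φ ψ Tk uk) := by
    intro h hm h0 hfin
    refine ⟨hm.aestronglyMeasurable, ?_⟩
    show (∫⁻ ω, (‖h ω‖₊ : ℝ≥0∞) ∂(forwardMeasure T Q X x φ ψ Tk uk)) < ⊤
    have e1 : (∫⁻ ω, (‖h ω‖₊ : ℝ≥0∞) ∂(forwardMeasure T Q X x φ ψ Tk uk))
        = ∫⁻ ω, ENNReal.ofReal (h ω) ∂(forwardMeasure T Q X x φ ψ Tk uk) :=
      lintegral_congr fun ω => by
        rw [Real.nnnorm_of_nonneg (h0 ω), ENNReal.ofReal, Real.toNNReal_of_nonneg (h0 ω)]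
    rw [e1, ← Measure.restrict_univ (μ := forwardMeasure T Q X x φ ψ Tk uk),
      hconv h hm Set.univ MeasurableSet.univ]
    exact hfin
  have hgint : Integrable (fun ω => exp (u ⬝ᵥ X r ω + w ⬝ᵥ X t ω))
      (forwardMeasure T Q X x φ ψ Tk uk) := by
    refine hintQ' _ hgm (fun ω => (exp_pos _).le) ?_
    rw [key Set.univ MeasurableSet.univ]
    exact ENNReal.mul_lt_top ENNReal.ofReal_lt_top hJfin
  have hRint : Integrable (fun ω => exp (φ (t - r) (ψ (T - t) uk + w)
      + φ (r - s) (ψ (t - r) (ψ (T - t) uk + w) + u)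
      - φ (t - s) (ψ (T - t) uk)
      + (ψ (r - s) (ψ (t - r) (ψ (T - t) uk + w) + u) - ψ (T - s) uk) ⬝ᵥ X s ω))
      (forwardMeasure T Q X x φ ψ Tk uk) := by
    refine hintQ' _ hRm (fun ω => (exp_pos _).le) ?_
    rw [key2 Set.univ MeasurableSet.univ]
    exact ENNReal.mul_lt_top ENNReal.ofReal_lt_top hJfin
  haveI hQ'fin : IsFiniteMeasure (forwardMeasure T Q X x φ ψ Tk uk) := by
    constructor
    rw [hQ'd, withDensity_apply _ MeasurableSet.univ, Measure.restrict_univ]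
    have hDint : Integrable (fun ω => exp (φ (T - Tk) uk + ψ (T - Tk) uk ⬝ᵥ X Tk ω)
        / exp (φ T uk + ψ T uk ⬝ᵥ x)) Q := by
      refine (haψs.1.const_mul
        (exp (φ (T - Tk) uk) / exp (φ T uk + ψ T uk ⬝ᵥ x))).congr (ae_of_all _ fun ω => ?_)
      simp only [Real.exp_add]
      ring
    exact hDint.lintegral_lt_top
  haveI : SigmaFinite ((forwardMeasure T Q X x φ ψ Tk uk).trim (ℱ.le s)) := by
    haveI : IsFiniteMeasure ((forwardMeasure T Q X x φ ψ Tk uk).trim (ℱ.le s)) :=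
      ⟨by rw [trim_measurableSet_eq (ℱ.le s) MeasurableSet.univ]; exact measure_lt_top _ _⟩
    infer_instance
  have hseteq : ∀ A : Set Ω, MeasurableSet[ℱ s] A →
      (forwardMeasure T Q X x φ ψ Tk uk) A < ⊤ →
      ∫ ω in A, exp (φ (t - r) (ψ (T - t) uk + w)
          + φ (r - s) (ψ (t - r) (ψ (T - t) uk + w) + u)
          - φ (t - s) (ψ (T - t) uk)
          + (ψ (r - s) (ψ (t - r) (ψ (T - t) uk + w) + u) - ψ (T - s) uk) ⬝ᵥ X s ω)
        ∂(forwardMeasure T Q X x φ ψ Tk uk)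
      = ∫ ω in A, exp (u ⬝ᵥ X r ω + w ⬝ᵥ X t ω) ∂(forwardMeasure T Q X x φ ψ Tk uk) := by
    intro A hA _
    have hAm : MeasurableSet A := ℱ.le s _ hA
    rw [integral_eq_lintegral_of_nonneg_ae (ae_of_all _ fun ω => (exp_pos _).le)
        hRm.aestronglyMeasurable,
      integral_eq_lintegral_of_nonneg_ae (ae_of_all _ fun ω => (exp_pos _).le)
        hgm.aestronglyMeasurable,
      hconv _ hRm A hAm, hconv _ hgm A hAm, key A hA, key2 A hA]
  exact (ae_eq_condExp_of_forall_setIntegral_eq (ℱ.le s) hgint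
    (fun A hA _ => hRint.integrableOn) hseteq
    (hRms.stronglyMeasurable.aestronglyMeasurable)).symm
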